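/- Let d ∈ ℕ and ε ∈ (0,1), and let f(ε) := 1 + Σ_{k=1}^{∞} ((Π_{m=1}^{k}(m − 1/d))/(k+1)!)·ε^k. Let w : ℕ → ℝ satisfy w(0) = 1 and, for all r ∈ ℕ₀: if w(r) > ε then w(r+1) = w(r)·((w(r) − ε)/w(r))^{1/d}, and if w(r) ≤ ε then w(r+1) = w(r). Then for every integer r ≥ d·(ε^{−1} − 1)/f(ε) one has w(r) ≤ ε. In particular, min{ r ∈ ℕ₀ : w(r) ≤ ε } ≤ ⌈ d·(ε^{−1} − 1)/f(ε) ⌉. -/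

import Mathlib

open Finset


namespace ThiemardAux

noncomputable def c (θ : ℝ) (k : ℕ) : ℝ :=
  (∏ m ∈ Icc 1 k, ((m : ℝ) - θ)) / (Nat.factorial k)

lemma c_zero (θ : ℝ) : c θ 0 = 1 := by simp [c]

lemma c_succ (θ : ℝ) (k : ℕ) :
    ((k : ℝ) + 1) * c θ (k + 1) = ((k : ℝ) + 1 - θ) * c θ k := by
  have h : (1 : ℕ) ≤ k + 1 := by omega
  have hfac : ((Nat.factorial (k+1) : ℝ)) = ((k:ℝ)+1) * (Nat.factorial k : ℝ) := by
    rw [Nat.factorial_succ]; push_cast; ring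
  have hk0 : ((Nat.factorial k : ℝ)) ≠ 0 := by
    exact_mod_cast Nat.factorial_ne_zero k
  have hk1 : ((k:ℝ)+1) ≠ 0 := by positivity
  rw [c, c, Finset.prod_Icc_succ_top h, hfac]
  push_cast
  field_simp

lemma c_nonneg {θ : ℝ} (hθ : θ ≤ 1) (k : ℕ) : 0 ≤ c θ k := by
  apply div_nonneg
  · apply Finset.prod_nonneg
    intro m hm
    have : 1 ≤ m := (Finset.mem_Icc.mp hm).1
    have : (1:ℝ) ≤ m := by exact_mod_cast this
    linarith
  · positivity

noncomputable def S (θ : ℝ) (n : ℕ) (x : ℝ) : ℝ := ∑ k ∈ range n, c θ k * x ^ k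

noncomputable def T (θ : ℝ) (n : ℕ) (x : ℝ) : ℝ :=
  ∑ k ∈ range n, c θ k * ((k : ℝ) * x ^ (k - 1))

lemma hasDerivAt_S (θ : ℝ) (n : ℕ) (x : ℝ) :
    HasDerivAt (fun y => S θ n y) (T θ n x) x := by
  unfold S T
  exact HasDerivAt.fun_sum fun k _ => (hasDerivAt_pow k x).const_mul (c θ k)

lemma key_identity (θ x : ℝ) (n : ℕ) :
    (1 - x) * T θ (n + 1) x = (1 - θ) * S θ (n + 1) x - ((n : ℝ) + 1 - θ) * c θ n * x ^ n := by
  induction n with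
  | zero => simp [S, T, c_zero]
  | succ n ih =>
    have hc := c_succ θ n
    have ih' : (1 - x) * T θ (n + 1) x
        = (1 - θ) * S θ (n + 1) x - (((n : ℝ) + 1) * c θ (n + 1)) * x ^ n := by
      linear_combination ih + x ^ n * hc
    have hT : T θ (n + 2) x = T θ (n + 1) x + c θ (n + 1) * (((n : ℕ) + 1 : ℝ) * x ^ n) := by
      unfold T
      rw [Finset.sum_range_succ]
      norm_num
    have hS : S θ (n + 2) x = S θ (n + 1) x + c θ (n + 1) * x ^ (n + 1) := by
      unfold S
      rw [Finset.sum_range_succ]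
    rw [hT, hS]
    push_cast
    linear_combination ih'

lemma one_sub_mul_T_le {θ x : ℝ} (hθ : θ ≤ 1) (hx : 0 ≤ x) (n : ℕ) :
    (1 - x) * T θ (n + 1) x ≤ (1 - θ) * S θ (n + 1) x := by
  rw [key_identity]
  have h1 : 0 ≤ ((n : ℝ) + 1 - θ) * c θ n * x ^ n := by
    apply mul_nonneg (mul_nonneg _ (c_nonneg hθ n)) (pow_nonneg hx n)
    have : (0:ℝ) ≤ n := Nat.cast_nonneg n
    linarith
  linarith

lemma S_zero_eq (θ : ℝ) (n : ℕ) : S θ (n + 1) 0 = 1 := by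
  unfold S
  rw [Finset.sum_eq_single 0]
  · simp [c_zero]
  · intro k _ hk
    simp [zero_pow hk]
  · intro h; exact absurd (Finset.mem_range.mpr (Nat.succ_pos n)) h

lemma S_mul_le_one {θ : ℝ} (hθ0 : 0 ≤ θ) (hθ1 : θ ≤ 1) {x : ℝ} (hx0 : 0 ≤ x) (hx1 : x < 1)
    (n : ℕ) : S θ (n + 1) x * (1 - x) ^ ((1:ℝ) - θ) ≤ 1 := by
  set G : ℝ → ℝ := fun y => S θ (n + 1) y * (1 - y) ^ ((1:ℝ) - θ) with hG
  -- HasDerivAt for G at points y with y < 1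
  have hGderiv : ∀ y : ℝ, y < 1 →
      HasDerivAt G (T θ (n+1) y * (1 - y) ^ ((1:ℝ) - θ)
        + S θ (n+1) y * (((1:ℝ) - θ) * (1 - y) ^ ((1:ℝ) - θ - 1) * (-1))) y := by
    intro y hy
    have h1y : (0:ℝ) < 1 - y := by linarith
    have hu : HasDerivAt (fun z : ℝ => 1 - z) (-1) y := by
      simpa using (hasDerivAt_id y).const_sub (1:ℝ)
    have hr : HasDerivAt (fun z : ℝ => z ^ ((1:ℝ) - θ))
        (((1:ℝ) - θ) * (1 - y) ^ ((1:ℝ) - θ - 1)) (1 - y) :=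
      Real.hasDerivAt_rpow_const (Or.inl h1y.ne')
    have hcomp : HasDerivAt (fun z : ℝ => (1 - z) ^ ((1:ℝ) - θ))
        (((1:ℝ) - θ) * (1 - y) ^ ((1:ℝ) - θ - 1) * (-1)) y := hr.comp y hu
    exact (hasDerivAt_S θ (n+1) y).mul hcomp
  have hG0 : G 0 = 1 := by
    simp [hG, S_zero_eq]
  rcases eq_or_lt_of_le hx0 with h0 | h0
  · rw [← h0]
    norm_num [S_zero_eq, Real.one_rpow]
  · -- antitone on Icc 0 x
    have hanti : AntitoneOn G (Set.Icc 0 x) := by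
      apply antitoneOn_of_deriv_nonpos (convex_Icc 0 x)
      · intro y hy
        have hy1 : y < 1 := lt_of_le_of_lt hy.2 hx1
        exact ((hGderiv y hy1).continuousAt).continuousWithinAt
      · rw [interior_Icc]
        intro y hy
        have hy1 : y < 1 := lt_of_lt_of_le hy.2 hx1.le
        exact (hGderiv y hy1).differentiableAt.differentiableWithinAt
      · rw [interior_Icc]
        intro y hy
        have hy1 : y < 1 := lt_of_lt_of_le hy.2 hx1.le
        have h1y : (0:ℝ) < 1 - y := by linarith
        rw [(hGderiv y hy1).deriv]
        have hpow1 : (1 - y) ^ ((1:ℝ) - θ) = (1 - y) * (1 - y) ^ (-θ) := by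
          rw [show (1:ℝ) - θ = 1 + (-θ) by ring, Real.rpow_add h1y, Real.rpow_one]
        have hpow2 : (1 - y) ^ ((1:ℝ) - θ - 1) = (1 - y) ^ (-θ) := by
          norm_num
        rw [hpow1, hpow2]
        have hkey := one_sub_mul_T_le hθ1 hy.1.le n
        have hA : (0:ℝ) ≤ (1 - y) ^ (-θ) := Real.rpow_nonneg h1y.le _
        nlinarith [hA, hkey]
    have := hanti (Set.left_mem_Icc.mpr hx0) (Set.right_mem_Icc.mpr hx0) hx0
    rw [hG0] at this
    exact this


lemma truncated_bound {θ : ℝ} (hθ0 : 0 < θ) (hθ1 : θ ≤ 1) {ε : ℝ} (hε0 : 0 < ε) (hε1 : ε < 1)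
    (n : ℕ) :
    (1 - ε) ^ θ ≤ 1 - θ * ∑ k ∈ range (n + 1), c θ k * (ε ^ (k + 1) / ((k : ℝ) + 1)) := by
  set F : ℝ → ℝ := fun x => ∑ k ∈ range (n + 1), c θ k * (x ^ (k + 1) / ((k : ℝ) + 1)) with hFdef
  set H : ℝ → ℝ := fun x => (1 - θ * F x) - (1 - x) ^ θ with hHdef
  have hFderiv : ∀ y : ℝ, HasDerivAt F (S θ (n + 1) y) y := by
    intro y
    have h1 : HasDerivAt F
        (∑ k ∈ range (n + 1), c θ k * ((((k : ℕ) + 1 : ℕ) : ℝ) * y ^ k / ((k : ℝ) + 1))) y := by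
      apply HasDerivAt.fun_sum
      intro k _
      have := ((hasDerivAt_pow (k + 1) y).div_const ((k : ℝ) + 1)).const_mul (c θ k)
      simpa using this
    have h2 : (∑ k ∈ range (n + 1), c θ k * ((((k : ℕ) + 1 : ℕ) : ℝ) * y ^ k / ((k : ℝ) + 1)))
        = S θ (n + 1) y := by
      unfold S
      apply Finset.sum_congr rfl
      intro k _
      have hk : ((k : ℝ) + 1) ≠ 0 := by positivity
      push_cast
      field_simp
    rwa [h2] at h1
  have hHderiv : ∀ y : ℝ, y < 1 →
      HasDerivAt H (-(θ * S θ (n + 1) y) - θ * (1 - y) ^ (θ - 1) * (-1)) y := by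
    intro y hy
    have h1y : (0 : ℝ) < 1 - y := by linarith
    have hu : HasDerivAt (fun z : ℝ => 1 - z) (-1) y := by
      simpa using (hasDerivAt_id y).const_sub (1 : ℝ)
    have hr : HasDerivAt (fun z : ℝ => z ^ θ) (θ * (1 - y) ^ (θ - 1)) (1 - y) :=
      Real.hasDerivAt_rpow_const (Or.inl h1y.ne')
    have hcomp : HasDerivAt (fun z : ℝ => (1 - z) ^ θ) (θ * (1 - y) ^ (θ - 1) * (-1)) y :=
      hr.comp y hu
    exact (((hFderiv y).const_mul θ).const_sub 1).sub hcomp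
  have hH0 : H 0 = 0 := by
    simp [hHdef, hFdef, Real.one_rpow]
  have hmono : MonotoneOn H (Set.Icc 0 ε) := by
    apply monotoneOn_of_deriv_nonneg (convex_Icc 0 ε)
    · intro y hy
      have hy1 : y < 1 := lt_of_le_of_lt hy.2 hε1
      exact ((hHderiv y hy1).continuousAt).continuousWithinAt
    · rw [interior_Icc]
      intro y hy
      have hy1 : y < 1 := lt_of_lt_of_le hy.2 hε1.le
      exact (hHderiv y hy1).differentiableAt.differentiableWithinAt
    · rw [interior_Icc]
      intro y hy
      have hy1 : y < 1 := lt_of_lt_of_le hy.2 hε1.le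
      have h1y : (0 : ℝ) < 1 - y := by linarith
      rw [(hHderiv y hy1).deriv]
      have hS := S_mul_le_one hθ0.le hθ1 hy.1.le hy1 n
      have hB : (0 : ℝ) < (1 - y) ^ (θ - 1) := Real.rpow_pos_of_pos h1y _
      have hmul : (1 - y) ^ ((1 : ℝ) - θ) * (1 - y) ^ (θ - 1) = 1 := by
        rw [← Real.rpow_add h1y]
        norm_num
      have hSle : S θ (n + 1) y ≤ (1 - y) ^ (θ - 1) := by
        nlinarith [mul_le_mul_of_nonneg_right hS hB.le]
      nlinarith [hSle, hθ0]
  have := hmono (Set.left_mem_Icc.mpr hε0.le) (Set.right_mem_Icc.mpr hε0.le) hε0.le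
  rw [hH0] at this
  have hHε : (0 : ℝ) ≤ (1 - θ * F ε) - (1 - ε) ^ θ := this
  linarith [hHε]

lemma step_ineq {θ ε w : ℝ} (hθ0 : 0 < θ) (hθ1 : θ ≤ 1) (hε : 0 < ε) (hεw : ε < w)
    (hw1 : w ≤ 1) :
    w * ((w - ε) / w) ^ θ ≤ w - (1 - (1 - ε) ^ θ) := by
  have hw0 : 0 < w := lt_trans hε hεw
  have hx : 0 < w - ε := by linarith
  have ha : 0 < 1 - ε := by linarith
  have haθ : (0 : ℝ) < (1 - ε) ^ θ := Real.rpow_pos_of_pos ha θ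
  have h1 : w * ((w - ε) / w) ^ θ = (w - ε) ^ θ * w ^ ((1 : ℝ) - θ) := by
    rw [Real.div_rpow hx.le hw0.le, Real.rpow_sub hw0, Real.rpow_one]
    ring
  have hAM1 : ((w - ε) / (1 - ε)) ^ θ * w ^ ((1 : ℝ) - θ)
      ≤ θ * ((w - ε) / (1 - ε)) + (1 - θ) * w :=
    Real.geom_mean_le_arith_mean2_weighted hθ0.le (by linarith) (by positivity) hw0.le
      (by ring)
  have key1 : (w - ε) ^ θ * w ^ ((1 : ℝ) - θ)
      ≤ (1 - ε) ^ θ * (θ * ((w - ε) / (1 - ε)) + (1 - θ) * w) := by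
    have heq : (w - ε) ^ θ * w ^ ((1 : ℝ) - θ)
        = (1 - ε) ^ θ * (((w - ε) / (1 - ε)) ^ θ * w ^ ((1 : ℝ) - θ)) := by
      rw [Real.div_rpow hx.le ha.le]
      field_simp
    rw [heq]
    exact mul_le_mul_of_nonneg_left hAM1 haθ.le
  have hAM2 : (1 : ℝ) ≤ θ * (1 - ε) ^ (θ - 1) + (1 - θ) * (1 - ε) ^ θ := by
    have h := Real.geom_mean_le_arith_mean2_weighted hθ0.le (by linarith : (0 : ℝ) ≤ 1 - θ)
      (Real.rpow_nonneg ha.le (θ - 1)) (Real.rpow_nonneg ha.le θ) (by ring)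
    have heq : ((1 - ε) ^ (θ - 1)) ^ θ * ((1 - ε) ^ θ) ^ ((1 : ℝ) - θ) = 1 := by
      rw [← Real.rpow_mul ha.le, ← Real.rpow_mul ha.le, ← Real.rpow_add ha,
        show (θ - 1) * θ + θ * (1 - θ) = 0 by ring, Real.rpow_zero]
    linarith [h, heq]
  have key2 : (1 - ε) ^ θ * (θ * ((w - ε) / (1 - ε)) + (1 - θ) * w)
      ≤ (1 - ε) ^ θ + (w - 1) := by
    have hpow : (1 - ε) ^ (θ - 1) = (1 - ε) ^ θ / (1 - ε) := by
      rw [Real.rpow_sub ha, Real.rpow_one]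
    have hexp : (1 - ε) ^ θ * (θ * ((w - ε) / (1 - ε)) + (1 - θ) * w)
        = (1 - ε) ^ θ + (w - 1) * (θ * (1 - ε) ^ (θ - 1) + (1 - θ) * (1 - ε) ^ θ) := by
      rw [hpow]
      field_simp
      ring
    rw [hexp]
    have hw1' : w - 1 ≤ 0 := by linarith
    nlinarith [mul_le_mul_of_nonpos_left hAM2 hw1']
  linarith [h1 ▸ (key1.trans key2)]

end ThiemardAux

open ThiemardAux

/-- Improved height bound for Thiémard's decomposition: with
`f(ε) = 1 + ∑_{k=1}^∞ ((∏_{m=1}^k (m - 1/d))/(k+1)!) ε^k`, the weights `w r` along the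
leftmost path of the decomposition (with `w 0 = 1` and
`w (r+1) = w r ((w r - ε)/w r)^{1/d}` as long as `w r > ε`) satisfy `w r ≤ ε` for every
`r ≥ d (ε⁻¹ - 1)/f(ε)`; in particular the height `min { r : w r ≤ ε }` of the partition
is at most `⌈d (ε⁻¹ - 1)/f(ε)⌉`. -/
theorem thiemard_improved_height_bound (d : ℕ) (hd : 1 ≤ d) (ε : ℝ)
    (hε : ε ∈ Set.Ioo (0 : ℝ) 1)
    (f : ℝ) (hf : f = 1 + ∑' k : ℕ,
      (∏ m ∈ Icc 1 (k + 1), ((m : ℝ) - 1 / d)) / (Nat.factorial (k + 2)) * ε ^ (k + 1))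
    (w : ℕ → ℝ) (hw0 : w 0 = 1)
    (hrec : ∀ r : ℕ, ε < w r → w (r + 1) = w r * ((w r - ε) / w r) ^ ((1 : ℝ) / d))
    (hstop : ∀ r : ℕ, w r ≤ ε → w (r + 1) = w r) :
    (∀ r : ℕ, (d : ℝ) * (ε⁻¹ - 1) / f ≤ r → w r ≤ ε) ∧
    sInf { r : ℕ | w r ≤ ε } ≤ ⌈(d : ℝ) * (ε⁻¹ - 1) / f⌉₊ := by
  obtain ⟨hε0, hε1⟩ := hε
  have hd1 : (1 : ℝ) ≤ (d : ℝ) := by exact_mod_cast hd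
  have hd0 : (0 : ℝ) < (d : ℝ) := by linarith
  set θ : ℝ := 1 / (d : ℝ) with hθdef
  have hθ0 : 0 < θ := by rw [hθdef]; positivity
  have hθ1 : θ ≤ 1 := by rw [hθdef, div_le_one hd0]; exact hd1
  set δ : ℝ := 1 - (1 - ε) ^ θ with hδdef
  have hδ0 : 0 < δ := by
    have h := Real.rpow_lt_one (by linarith : (0:ℝ) ≤ 1 - ε) (by linarith) hθ0
    rw [hδdef]; linarith
  -- rewrite f using the coefficients c
  set g : ℕ → ℝ := fun k => c θ (k + 1) * ε ^ (k + 1) / ((k : ℝ) + 2) with hgdef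
  have hgnn : ∀ k, 0 ≤ g k := by
    intro k
    rw [hgdef]
    have h1 := c_nonneg hθ1 (k + 1)
    positivity
  have hf' : f = 1 + ∑' k : ℕ, g k := by
    rw [hf]
    congr 1
    apply tsum_congr
    intro k
    simp only [hgdef, c]
    have h1 : ((Nat.factorial (k + 2) : ℝ)) = ((k : ℝ) + 2) * (Nat.factorial (k + 1) : ℝ) := by
      rw [Nat.factorial_succ]; push_cast; ring
    have h2 : ((Nat.factorial (k + 1) : ℝ)) ≠ 0 := by
      exact_mod_cast Nat.factorial_ne_zero (k + 1)
    have h3 : ((k : ℝ) + 2) ≠ 0 := by positivity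
    rw [h1, div_mul_eq_mul_div, div_mul_eq_mul_div, div_div, mul_comm ((k:ℝ)+2)]
  -- bound on the partial sums
  have hpartial : ∀ n, ∑ k ∈ range n, g k ≤ (δ / θ - ε) / ε := by
    intro n
    have htr := truncated_bound hθ0 hθ1 hε0 hε1 n
    have hQ : ∑ k ∈ range (n + 1), c θ k * (ε ^ (k + 1) / ((k : ℝ) + 1))
        = ε + ε * ∑ k ∈ range n, g k := by
      rw [Finset.sum_range_succ', Finset.mul_sum]
      have h0 : c θ 0 * (ε ^ (0 + 1) / ((0 : ℕ) + 1 : ℝ)) = ε := by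
        rw [c_zero]; norm_num
      rw [h0]
      rw [add_comm (∑ _ ∈ _, _)]
      congr 1
      apply Finset.sum_congr rfl
      intro k _
      rw [hgdef]
      have h3 : ((k : ℝ) + 2) ≠ 0 := by positivity
      push_cast
      field_simp
      ring
    rw [hQ] at htr
    have h5 : θ * (ε + ε * ∑ k ∈ range n, g k) ≤ δ := by rw [hδdef]; linarith
    have h6 : ε + ε * ∑ k ∈ range n, g k ≤ δ / θ := by
      rw [le_div_iff₀ hθ0]; nlinarith [h5]
    rw [le_div_iff₀ hε0]
    nlinarith [h6]
  have hsum : Summable g := summable_of_sum_range_le hgnn hpartial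
  have htsum : (∑' k, g k) ≤ (δ / θ - ε) / ε := Real.tsum_le_of_sum_range_le hgnn hpartial
  have hf1 : 1 ≤ f := by
    rw [hf']
    have : 0 ≤ ∑' k, g k := tsum_nonneg hgnn
    linarith
  have hfpos : 0 < f := by linarith
  have hεf : ε * f ≤ δ / θ := by
    rw [hf']
    have h1 : ε * (1 + ∑' k, g k) ≤ ε * (1 + (δ / θ - ε) / ε) :=
      mul_le_mul_of_nonneg_left (by linarith [htsum]) hε0.le
    have h2 : ε * (1 + (δ / θ - ε) / ε) = δ / θ := by field_simp; ring
    linarith [h1, h2 ▸ h1]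
  -- main induction
  have claim : ∀ r : ℕ, w r ≤ ε ∨ (ε < w r ∧ w r ≤ 1 - (r : ℝ) * δ) := by
    intro r
    induction r with
    | zero =>
      right
      rw [hw0]
      push_cast
      constructor <;> linarith
    | succ r ih =>
      rcases ih with h | ⟨h1, h2⟩
      · left; rw [hstop r h]; exact h
      · have hrδ : (0 : ℝ) ≤ (r : ℝ) * δ := by positivity
        have hwr1 : w r ≤ 1 := by linarith
        have hstep := step_ineq hθ0 hθ1 hε0 h1 hwr1
        have hle : w (r + 1) ≤ w r - δ := by
          rw [hrec r h1, hδdef]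
          exact hstep
        by_cases hc : w (r + 1) ≤ ε
        · left; exact hc
        · right
          refine ⟨lt_of_not_ge hc, ?_⟩
          push_cast
          linarith
  have main : ∀ r : ℕ, (d : ℝ) * (ε⁻¹ - 1) / f ≤ r → w r ≤ ε := by
    intro r hr
    rcases claim r with h | ⟨h1, h2⟩
    · exact h
    · exfalso
      have hr' : (d : ℝ) * (ε⁻¹ - 1) ≤ (r : ℝ) * f := by
        rw [div_le_iff₀ hfpos] at hr
        linarith [hr]
      have heq : ε * ((d : ℝ) * (ε⁻¹ - 1)) = (d : ℝ) * (1 - ε) := by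
        field_simp
      have h3 : (d : ℝ) * (1 - ε) ≤ (r : ℝ) * (ε * f) := by
        have := mul_le_mul_of_nonneg_left hr' hε0.le
        nlinarith [this]
      have h4 : (r : ℝ) * (ε * f) ≤ (r : ℝ) * (δ / θ) :=
        mul_le_mul_of_nonneg_left hεf (Nat.cast_nonneg r)
      have hθd : δ / θ = (d : ℝ) * δ := by
        rw [hθdef, one_div, div_eq_mul_inv, inv_inv, mul_comm]
      rw [hθd] at h4
      have h5 : (1 : ℝ) - ε ≤ (r : ℝ) * δ := by nlinarith [h3.trans h4, hd0]
      linarith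
  refine ⟨main, Nat.sInf_le ?_⟩
  exact main _ (Nat.le_ceil _)
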